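/- Let n > 2 and 2 ≤ k ≤ n, and consider F_k(K_{2,n}) with parts X = {x_1, x_2} and Y. Let Ω be the set of (k−1)-element subsets of Y. For a family α ⊆ Ω, define φ_α on vertices of F_k(K_{2,n}) by: φ_α(A) = (A \ X) ∪ (X \ A) if |A ∩ X| = 1 and A ∩ Y ∈ α (i.e., the single X-element of A is replaced by the other element of X), and φ_α(A) = A otherwise. Then each φ_α is an automorphism of F_k(K_{2,n}), φ_α ∘ φ_β = φ_{α △ β} for all α, β ⊆ Ω, and the map α ↦ φ_α is an injective group homomorphism from the group of subsets of Ω under symmetric difference (isomorphic to (ℤ/2ℤ)^{C(n,k−1)}) into Aut(F_k(K_{2,n})). -/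

import Mathlib

/-- The `k`-token graph of a simple graph `G`: vertices are the `k`-element
subsets of the vertex set, two subsets being adjacent iff their symmetric
difference is a pair `{a, b}` with `ab` an edge of `G`. -/
def tokenGraph {V : Type*} [DecidableEq V] (G : SimpleGraph V) (k : ℕ) :
    SimpleGraph {A : Finset V // A.card = k} where
  Adj A B := ∃ a b, G.Adj a b ∧ symmDiff A.1 B.1 = {a, b}
  symm := by
    constructor
    rintro A B ⟨a, b, hab, h⟩
    exact ⟨a, b, hab, by rwa [symmDiff_comm]⟩
  loopless := by
    constructor
    rintro A ⟨a, b, hab, h⟩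
    rw [symmDiff_self] at h
    exact absurd h.symm (by simp)
/-- The number of elements of a finite set of vertices of `K_{m,n}`
(on `Fin m ⊕ Fin n`) lying in the left part `X`. -/
def leftCard {m n : ℕ} (A : Finset (Fin m ⊕ Fin n)) : ℕ :=
  (A.filter (fun v => v.isLeft = true)).card

/-- `H_i`: the set of vertices `A` of `F_k(K_{m,n})` with `|A ∩ X| = i`. -/
def levelSet (m n k i : ℕ) :
    Set {A : Finset (Fin m ⊕ Fin n) // A.card = k} :=
  {A | leftCard A.1 = i}

/-- The part of a set of vertices of K_{2,n} lying in the right part Y,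
viewed as a subset of Fin n. -/
def yPart {n : ℕ} (A : Finset (Fin 2 ⊕ Fin n)) : Finset (Fin n) :=
  Finset.univ.filter (fun j => Sum.inr j ∈ A)

/-- The involution of V(K_{2,n}) exchanging the two vertices of the left
part X and fixing the right part Y. -/
def flipX {n : ℕ} : Fin 2 ⊕ Fin n → Fin 2 ⊕ Fin n :=
  Sum.elim (fun i => Sum.inl (i + 1)) Sum.inr
namespace SwapAux
open Finset Sum

lemma fin2 (i : Fin 2) : i = 0 ∨ i = 1 := by omega

lemma flipX_flipX {n : ℕ} (v : Fin 2 ⊕ Fin n) : flipX (flipX v) = v := by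
  rcases v with i | j
  · show Sum.inl (i + 1 + 1) = Sum.inl i
    congr 1; omega
  · rfl

lemma flipX_inj {n : ℕ} : Function.Injective (flipX (n := n)) :=
  Function.Involutive.injective flipX_flipX

lemma mem_image_flipX {n : ℕ} (A : Finset (Fin 2 ⊕ Fin n)) (v : Fin 2 ⊕ Fin n) :
    v ∈ A.image flipX ↔ flipX v ∈ A := by
  constructor
  · rintro h
    rcases Finset.mem_image.1 h with ⟨w, hw, rfl⟩
    rwa [flipX_flipX]
  · intro h
    exact Finset.mem_image.2 ⟨flipX v, h, flipX_flipX v⟩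

lemma image_image_flipX {n : ℕ} (A : Finset (Fin 2 ⊕ Fin n)) :
    (A.image flipX).image flipX = A := by
  rw [Finset.image_image]
  have : flipX ∘ flipX = (id : Fin 2 ⊕ Fin n → _) := funext flipX_flipX
  rw [this, Finset.image_id]

lemma card_image_flipX {n : ℕ} (A : Finset (Fin 2 ⊕ Fin n)) :
    (A.image flipX).card = A.card :=
  Finset.card_image_of_injective _ flipX_inj

lemma leftCard_image_flipX {n : ℕ} (A : Finset (Fin 2 ⊕ Fin n)) :
    leftCard (A.image flipX) = leftCard A := by
  unfold leftCard
  rw [Finset.filter_image, Finset.card_image_of_injective _ flipX_inj]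
  congr 1
  apply Finset.filter_congr
  intro v _
  rcases v with i | j <;> simp [flipX]

lemma yPart_image_flipX {n : ℕ} (A : Finset (Fin 2 ⊕ Fin n)) :
    yPart (A.image flipX) = yPart A := by
  unfold yPart
  apply Finset.filter_congr
  intro j _
  rw [mem_image_flipX]
  rfl

end SwapAux

namespace SwapAux
open Finset Sum

lemma flipX_inl {n : ℕ} (i : Fin 2) : (flipX (Sum.inl i) : Fin 2 ⊕ Fin n) = Sum.inl (i + 1) := rfl
lemma flipX_inr {n : ℕ} (j : Fin n) : (flipX (Sum.inr j) : Fin 2 ⊕ Fin n) = Sum.inr j := rfl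

lemma leftCard_one_xor {n : ℕ} {A : Finset (Fin 2 ⊕ Fin n)}
    (hA : leftCard A = 1) : (Sum.inl 0 ∈ A) ↔ ¬ (Sum.inl 1 ∈ A) := by
  have hfil : A.filter (fun v => v.isLeft = true)
      = ({Sum.inl 0, Sum.inl 1} : Finset (Fin 2 ⊕ Fin n)).filter (· ∈ A) := by
    ext v
    rcases v with i | j
    · rcases fin2 i with rfl | rfl <;> simp [And.comm]
    · simp
  rw [leftCard, hfil] at hA
  by_cases h0 : Sum.inl (0:Fin 2) ∈ A <;> by_cases h1 : Sum.inl (1:Fin 2) ∈ A <;>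
    simp_all [Finset.filter_insert, Finset.filter_singleton]

lemma leftCard_one_xor' {n : ℕ} {A : Finset (Fin 2 ⊕ Fin n)}
    (hA : leftCard A = 1) (x : Fin 2) :
    (Sum.inl (x + 1) ∈ A) ↔ ¬ (Sum.inl x ∈ A) := by
  rcases fin2 x with rfl | rfl
  · show Sum.inl (1:Fin 2) ∈ A ↔ _
    have := leftCard_one_xor hA
    tauto
  · show Sum.inl (0:Fin 2) ∈ A ↔ _
    have := leftCard_one_xor hA
    tauto

lemma symmDiff_flip_left {n : ℕ} {A B : Finset (Fin 2 ⊕ Fin n)} {x : Fin 2} {y : Fin n}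
    (hA : leftCard A = 1)
    (h : symmDiff A B = {Sum.inl x, Sum.inr y}) :
    symmDiff (A.image flipX) B = {Sum.inl (x + 1), Sum.inr y} := by
  have hmem : ∀ v, v ∈ symmDiff A B ↔ v = Sum.inl x ∨ v = Sum.inr y := by
    intro v; rw [h]; simp
  have hx1 : x + 1 ≠ x := by omega
  have hx1' : x ≠ x + 1 := fun hc => hx1 hc.symm
  have hx2 : x + 1 + 1 = x := by omega
  have hxorA := leftCard_one_xor' hA x
  have e1 : (Sum.inl x ∈ A ∧ Sum.inl x ∉ B) ∨ (Sum.inl x ∈ B ∧ Sum.inl x ∉ A) := by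
    have := (hmem (Sum.inl x)).2 (Or.inl rfl)
    rwa [Finset.mem_symmDiff] at this
  have e2 : ¬((Sum.inl (x+1) ∈ A ∧ Sum.inl (x+1) ∉ B) ∨
      (Sum.inl (x+1) ∈ B ∧ Sum.inl (x+1) ∉ A)) := by
    intro hc
    have := (hmem (Sum.inl (x+1))).1 (Finset.mem_symmDiff.2 hc)
    simp [hx1] at this
  ext v
  rcases v with i | j
  · have hi : i = x ∨ i = x + 1 := by omega
    rcases hi with rfl | rfl <;>
      simp only [Finset.mem_symmDiff, mem_image_flipX, flipX_inl, hx2,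
        Finset.mem_insert, Finset.mem_singleton, Sum.inl.injEq, reduceCtorEq,
        or_false] <;> tauto
  · have h3 := hmem (Sum.inr j)
    rw [Finset.mem_symmDiff] at h3
    simp only [Finset.mem_symmDiff, mem_image_flipX, flipX_inr,
      Finset.mem_insert, Finset.mem_singleton, Sum.inr.injEq,
      reduceCtorEq, false_or] at h3 ⊢
    exact h3

lemma not_both_one {n : ℕ} {A B : Finset (Fin 2 ⊕ Fin n)} {x : Fin 2} {y : Fin n}
    (h : symmDiff A B = {Sum.inl x, Sum.inr y})
    (hA : leftCard A = 1) (hB : leftCard B = 1) : False := by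
  have hmem : ∀ v, v ∈ symmDiff A B ↔ v = Sum.inl x ∨ v = Sum.inr y := by
    intro v; rw [h]; simp
  have hx1 : x + 1 ≠ x := by omega
  have e1 : (Sum.inl x ∈ A ∧ Sum.inl x ∉ B) ∨ (Sum.inl x ∈ B ∧ Sum.inl x ∉ A) := by
    have := (hmem (Sum.inl x)).2 (Or.inl rfl)
    rwa [Finset.mem_symmDiff] at this
  have e2 : ¬((Sum.inl (x+1) ∈ A ∧ Sum.inl (x+1) ∉ B) ∨
      (Sum.inl (x+1) ∈ B ∧ Sum.inl (x+1) ∉ A)) := by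
    intro hc
    have := (hmem (Sum.inl (x+1))).1 (Finset.mem_symmDiff.2 hc)
    simp [hx1] at this
  have hxA := leftCard_one_xor' hA x
  have hxB := leftCard_one_xor' hB x
  tauto

end SwapAux

namespace SwapAux
open Finset Sum

variable {n k : ℕ}

/-- The underlying vertex map of φ_α. -/
def fmap (α : Finset (Finset (Fin n))) (k : ℕ)
    (A : {A : Finset (Fin 2 ⊕ Fin n) // A.card = k}) :
    {A : Finset (Fin 2 ⊕ Fin n) // A.card = k} :=
  ⟨if leftCard A.1 = 1 ∧ yPart A.1 ∈ α then A.1.image flipX else A.1, by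
    split
    · rw [card_image_flipX]; exact A.2
    · exact A.2⟩

lemma fmap_fmap (α : Finset (Finset (Fin n)))
    (A : {A : Finset (Fin 2 ⊕ Fin n) // A.card = k}) :
    fmap α k (fmap α k A) = A := by
  apply Subtype.ext
  show (if _ then _ else _) = A.1
  by_cases h : leftCard A.1 = 1 ∧ yPart A.1 ∈ α
  · have h1 : (fmap α k A).1 = A.1.image flipX := by
      show (if _ then _ else _) = _
      rw [if_pos h]
    rw [h1] at *
    rw [if_pos, image_image_flipX]
    rw [leftCard_image_flipX, yPart_image_flipX]
    exact h
  · have h1 : (fmap α k A).1 = A.1 := by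
      show (if _ then _ else _) = _
      rw [if_neg h]
    rw [h1] at *
    rw [if_neg h]

lemma adj_norm {A B : {A : Finset (Fin 2 ⊕ Fin n) // A.card = k}}
    (h : (tokenGraph (completeBipartiteGraph (Fin 2) (Fin n)) k).Adj A B) :
    ∃ x y, symmDiff A.1 B.1 = {Sum.inl x, Sum.inr y} := by
  obtain ⟨a, b, hab, hs⟩ := h
  rcases a with x | y <;> rcases b with x' | y'
  · simp [completeBipartiteGraph] at hab
  · exact ⟨x, y', hs⟩
  · exact ⟨x', y, by rwa [Finset.pair_comm] at hs⟩
  · simp [completeBipartiteGraph] at hab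

lemma adj_pair {A B : {A : Finset (Fin 2 ⊕ Fin n) // A.card = k}}
    (x : Fin 2) (y : Fin n) (h : symmDiff A.1 B.1 = {Sum.inl x, Sum.inr y}) :
    (tokenGraph (completeBipartiteGraph (Fin 2) (Fin n)) k).Adj A B :=
  ⟨Sum.inl x, Sum.inr y, by simp [completeBipartiteGraph], h⟩

lemma adj_fmap (α : Finset (Finset (Fin n)))
    {A B : {A : Finset (Fin 2 ⊕ Fin n) // A.card = k}}
    (h : (tokenGraph (completeBipartiteGraph (Fin 2) (Fin n)) k).Adj A B) :
    (tokenGraph (completeBipartiteGraph (Fin 2) (Fin n)) k).Adj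
      (fmap α k A) (fmap α k B) := by
  obtain ⟨x, y, hs⟩ := adj_norm h
  by_cases hA : leftCard A.1 = 1 ∧ yPart A.1 ∈ α <;>
    by_cases hB : leftCard B.1 = 1 ∧ yPart B.1 ∈ α
  · exact absurd (not_both_one hs hA.1 hB.1) not_false
  · have h1 : (fmap α k A).1 = A.1.image flipX := by
      show (if _ then _ else _) = _; rw [if_pos hA]
    have h2 : (fmap α k B).1 = B.1 := by
      show (if _ then _ else _) = _; rw [if_neg hB]
    exact adj_pair (x + 1) y (by rw [h1, h2]; exact symmDiff_flip_left hA.1 hs)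
  · have h1 : (fmap α k A).1 = A.1 := by
      show (if _ then _ else _) = _; rw [if_neg hA]
    have h2 : (fmap α k B).1 = B.1.image flipX := by
      show (if _ then _ else _) = _; rw [if_pos hB]
    refine adj_pair (x + 1) y ?_
    rw [h1, h2, symmDiff_comm]
    exact symmDiff_flip_left hB.1 (by rwa [symmDiff_comm] at hs)
  · have h1 : (fmap α k A).1 = A.1 := by
      show (if _ then _ else _) = _; rw [if_neg hA]
    have h2 : (fmap α k B).1 = B.1 := by
      show (if _ then _ else _) = _; rw [if_neg hB]
    exact adj_pair x y (by rw [h1, h2]; exact hs)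

/-- φ_α as a graph automorphism. -/
def phi (α : Finset (Finset (Fin n))) (k : ℕ) :
    tokenGraph (completeBipartiteGraph (Fin 2) (Fin n)) k ≃g
      tokenGraph (completeBipartiteGraph (Fin 2) (Fin n)) k where
  toFun := fmap α k
  invFun := fmap α k
  left_inv := fmap_fmap α
  right_inv := fmap_fmap α
  map_rel_iff' := by
    intro A B
    constructor
    · intro h
      have h2 := adj_fmap α (A := fmap α k A) (B := fmap α k B) h
      rwa [fmap_fmap, fmap_fmap] at h2
    · exact adj_fmap α

end SwapAux

namespace SwapAux
open Finset Sum

variable {n k : ℕ}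

lemma fmap_val (α : Finset (Finset (Fin n)))
    (A : {A : Finset (Fin 2 ⊕ Fin n) // A.card = k}) :
    (fmap α k A).1 =
      if leftCard A.1 = 1 ∧ yPart A.1 ∈ α then A.1.image flipX else A.1 := rfl

lemma fmap_comp (α β : Finset (Finset (Fin n)))
    (A : {A : Finset (Fin 2 ⊕ Fin n) // A.card = k}) :
    fmap α k (fmap β k A) = fmap (symmDiff α β) k A := by
  apply Subtype.ext
  by_cases hL : leftCard A.1 = 1 <;> by_cases hβ : yPart A.1 ∈ β <;>
    by_cases hα : yPart A.1 ∈ α <;>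
    simp [fmap_val, hL, hβ, hα, leftCard_image_flipX, yPart_image_flipX,
      image_image_flipX, Finset.mem_symmDiff]

lemma phi_inj (hk1 : 2 ≤ k) (hk2 : k ≤ n) {α β : Finset (Finset (Fin n))}
    (h : (phi α k : tokenGraph (completeBipartiteGraph (Fin 2) (Fin n)) k ≃g
          tokenGraph (completeBipartiteGraph (Fin 2) (Fin n)) k) = phi β k)
    {S : Finset (Fin n)} (hS : S.card = k - 1) (hmem : S ∈ α) : S ∈ β := by
  set A0 : Finset (Fin 2 ⊕ Fin n) := insert (Sum.inl 0) (S.image Sum.inr) with hA0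
  have hni : (Sum.inl 0 : Fin 2 ⊕ Fin n) ∉ S.image Sum.inr := by simp
  have hcard : A0.card = k := by
    rw [hA0, Finset.card_insert_of_notMem hni,
      Finset.card_image_of_injective _ Sum.inr_injective, hS]
    omega
  have hleft : leftCard A0 = 1 := by
    have hfil : A0.filter (fun v => v.isLeft = true)
        = {(Sum.inl 0 : Fin 2 ⊕ Fin n)} := by
      ext v
      rcases v with i | j
      · simp [hA0]
      · simp [hA0]
    rw [leftCard, hfil, Finset.card_singleton]
  have hy : yPart A0 = S := by
    ext j
    simp [yPart, hA0]
  have hneq : A0.image flipX ≠ A0 := by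
    intro hc
    have h1 : (Sum.inl 1 : Fin 2 ⊕ Fin n) ∈ A0.image flipX := by
      rw [mem_image_flipX, flipX_inl]
      show Sum.inl (1 + 1) ∈ A0
      have : (1 + 1 : Fin 2) = 0 := by omega
      rw [this]
      simp [hA0]
    rw [hc] at h1
    simp [hA0, Fin.ext_iff] at h1
  have hAeq : (fmap α k ⟨A0, hcard⟩).1 = (fmap β k ⟨A0, hcard⟩).1 := by
    have := congrArg (fun (φ : tokenGraph (completeBipartiteGraph (Fin 2) (Fin n)) k ≃g
          tokenGraph (completeBipartiteGraph (Fin 2) (Fin n)) k) => (φ ⟨A0, hcard⟩).1) h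
    exact this
  rw [fmap_val, fmap_val] at hAeq
  simp only [hleft, hy, true_and] at hAeq
  rw [if_pos hmem] at hAeq
  by_cases hb : S ∈ β
  · exact hb
  · rw [if_neg hb] at hAeq
    exact absurd hAeq hneq

end SwapAux


/-- For n > 2 and 2 ≤ k ≤ n, the maps φ_α (α a family of (k−1)-subsets of Y)
— replacing, in each vertex A with |A ∩ X| = 1 and A ∩ Y ∈ α, the X-element
of A by the other element of X — are automorphisms of F_k(K_{2,n}) with
φ_α ∘ φ_β = φ_{α △ β}, and α ↦ φ_α is injective on families of
(k−1)-subsets; hence they give an injective homomorphism of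
(ℤ/2ℤ)^{C(n,k−1)} into Aut(F_k(K_{2,n})). -/
theorem swap_homomorphism_tokenGraph_K2n (n k : ℕ) (hn : 2 < n)
    (hk1 : 2 ≤ k) (hk2 : k ≤ n) :
    ∃ Φ : Finset (Finset (Fin n)) →
        (tokenGraph (completeBipartiteGraph (Fin 2) (Fin n)) k ≃g
          tokenGraph (completeBipartiteGraph (Fin 2) (Fin n)) k),
      (∀ (α : Finset (Finset (Fin n)))
          (A : {A : Finset (Fin 2 ⊕ Fin n) // A.card = k}),
        ((Φ α) A).1 =
          if leftCard A.1 = 1 ∧ yPart A.1 ∈ α then A.1.image flipX else A.1) ∧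
      (∀ α β : Finset (Finset (Fin n)),
        (∀ S ∈ α, S.card = k - 1) → (∀ S ∈ β, S.card = k - 1) →
        ∀ A, Φ α (Φ β A) = Φ (symmDiff α β) A) ∧
      Function.Injective
        (fun αs : {a : Finset (Finset (Fin n)) // ∀ S ∈ a, S.card = k - 1} =>
          Φ αs.1) := by
  refine ⟨fun α => SwapAux.phi α k, ?_, ?_, ?_⟩
  · intro α A
    rfl
  · intro α β _ _ A
    exact SwapAux.fmap_comp α β A
  · intro αs βs h
    apply Subtype.ext
    ext S
    constructor
    · intro hS
      exact SwapAux.phi_inj hk1 hk2 h (αs.2 S hS) hS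
    · intro hS
      exact SwapAux.phi_inj hk1 hk2 h.symm (βs.2 S hS) hS
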